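/- The polynomial p(z) = (−z⁶ + 6z⁴ + 4z³ − 9z² − 12z + 4)/8 is a Shabat polynomial in Zapponi form: every critical value of p lies in {1, −1} (explicitly, its derivative is proportional to (z−1)(z+1)³(z−2), with p(1) = −1, p(−1) = 1, and p(2) = 1), the sum of the distinct complex roots of p − 1 equals 1, and the sum of the distinct complex roots of p + 1 equals −1. -/

import Mathlib

open Polynomial

/-- The polynomial `p(z) = (−z⁶ + 6z⁴ + 4z³ − 9z² − 12z + 4)/8`. -/
noncomputable def pSZ : Polynomial ℂ :=
  Polynomial.C (1 / 8 : ℂ) *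
    (-Polynomial.X ^ 6 + 6 * Polynomial.X ^ 4 + 4 * Polynomial.X ^ 3 -
      9 * Polynomial.X ^ 2 - 12 * Polynomial.X + 4)

noncomputable def qSZ : Polynomial ℂ :=
  X ^ 4 + 2 * X ^ 3 - 3 * X ^ 2 - 12 * X - 12

lemma hC8 : (Polynomial.C (1 / 8 : ℂ)) * 8 = 1 := by
  have : (8 : ℂ[X]) = C 8 := (map_ofNat C 8).symm
  rw [this, ← C_mul]; norm_num

lemma hC34 : (Polynomial.C (-3 / 4 : ℂ)) = Polynomial.C (1 / 8 : ℂ) * (-6) := by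
  have : ((-6 : ℂ[X])) = C (-6) := by rw [map_neg]; exact congrArg _ (map_ofNat C 6).symm
  rw [this, ← C_mul]; norm_num

lemma hC18 : (Polynomial.C (-1 / 8 : ℂ)) = Polynomial.C (1 / 8 : ℂ) * (-1) := by
  have : ((-1 : ℂ[X])) = C (-1) := by rw [map_neg, map_one]
  rw [this, ← C_mul]; norm_num

lemma hderiv : Polynomial.derivative pSZ =
    Polynomial.C (-3 / 4 : ℂ) * (Polynomial.X - 1) *
      (Polynomial.X + 1) ^ 3 * (Polynomial.X - 2) := by
  rw [pSZ, hC34]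
  simp only [derivative_mul, derivative_C, derivative_add, derivative_sub,
    derivative_neg, derivative_X_pow, derivative_X, derivative_one,
    derivative_ofNat, Nat.cast_ofNat, map_ofNat]
  ring

lemma hfact1 : pSZ - 1 = Polynomial.C (-1 / 8 : ℂ) * ((X + 1) ^ 4 * (X - 2) ^ 2) := by
  rw [pSZ, hC18]
  linear_combination (1 : ℂ[X]) * hC8

lemma hfact2 : pSZ + 1 = Polynomial.C (-1 / 8 : ℂ) * ((X - 1) ^ 2 * qSZ) := by
  rw [pSZ, hC18, qSZ]
  linear_combination (-1 : ℂ[X]) * hC8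

lemma hC96 : (Polynomial.C (1 / 96 : ℂ)) * 96 = 1 := by
  have : (96 : ℂ[X]) = C 96 := (map_ofNat C 96).symm
  rw [this, ← C_mul]; norm_num

lemma hqderiv : Polynomial.derivative qSZ = 4 * X ^ 3 + 6 * X ^ 2 - 6 * X - 12 := by
  rw [qSZ]
  simp only [derivative_mul, derivative_add, derivative_sub, derivative_X_pow,
    derivative_X, derivative_ofNat, Nat.cast_ofNat, map_ofNat]
  ring

lemma hqmonic : qSZ.Monic := by
  unfold qSZ; monicity!

lemma hqsep : qSZ.Separable := by
  refine ⟨C (1/96 : ℂ) * (-4 * X ^ 2 + 10 * X - 10),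
    C (1/96 : ℂ) * (X ^ 3 - 2 * X ^ 2 - X + 2), ?_⟩
  have hd := hqderiv
  rw [qSZ] at hd ⊢
  rw [hd]
  linear_combination hC96

lemma hqndeg : qSZ.natDegree = 4 := by
  unfold qSZ; compute_degree!

lemma hqnext : qSZ.nextCoeff = 2 := by
  rw [nextCoeff, hqndeg]
  norm_num [qSZ, coeff_X_pow, coeff_X]

lemma hqsum : qSZ.roots.sum = -2 := by
  have h := Splits.nextCoeff_eq_neg_sum_roots_of_monic
    (IsAlgClosed.splits qSZ) hqmonic
  rw [hqnext] at h
  linear_combination h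

lemma hroots1 : ((pSZ - 1).roots.toFinset.sum id) = 1 := by
  have hx1 : ((X + 1 : ℂ[X])) = X - C (-1) := by simp
  have hne : ((X + 1 : ℂ[X]) ^ 4 * (X - 2) ^ 2) ≠ 0 := by
    refine mul_ne_zero (pow_ne_zero _ ?_) (pow_ne_zero _ ?_)
    · rw [hx1]; exact X_sub_C_ne_zero _
    · have : ((X - 2 : ℂ[X])) = X - C 2 := by rw [map_ofNat]
      rw [this]; exact X_sub_C_ne_zero _
  rw [hfact1, roots_C_mul _ (by norm_num : (-1/8 : ℂ) ≠ 0), roots_mul hne,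
    roots_pow, roots_pow, hx1, roots_X_sub_C,
    show ((X - 2 : ℂ[X])) = X - C 2 by rw [map_ofNat], roots_X_sub_C,
    Multiset.toFinset_add, Multiset.toFinset_nsmul _ 4 (by norm_num),
    Multiset.toFinset_nsmul _ 2 (by norm_num),
    Multiset.toFinset_singleton, Multiset.toFinset_singleton]
  rw [show ({-1} ∪ {2} : Finset ℂ) = {-1, 2} by rfl]
  rw [Finset.sum_insert (by norm_num), Finset.sum_singleton]
  norm_num

lemma hroots2 : ((pSZ + 1).roots.toFinset.sum id) = -1 := by
  have hne : ((X - 1 : ℂ[X]) ^ 2 * qSZ) ≠ 0 :=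
    mul_ne_zero (pow_ne_zero _ (by
      have : ((X - 1 : ℂ[X])) = X - C 1 := by rw [map_one]
      rw [this]; exact X_sub_C_ne_zero _)) hqmonic.ne_zero
  have hnodup : qSZ.roots.Nodup := Polynomial.nodup_roots hqsep
  have hsum : qSZ.roots.toFinset.sum id = qSZ.roots.sum := by
    rw [Finset.sum, Multiset.toFinset_val, Multiset.Nodup.dedup hnodup, Multiset.map_id]
  have h1 : (1 : ℂ) ∉ qSZ.roots.toFinset := by
    rw [Multiset.mem_toFinset, mem_roots hqmonic.ne_zero]
    intro h
    have h2 := h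
    rw [IsRoot, qSZ] at h2
    simp at h2
    norm_num at h2
  rw [hfact2, roots_C_mul _ (by norm_num : (-1/8 : ℂ) ≠ 0), roots_mul hne,
    roots_pow, show ((X - 1 : ℂ[X])) = X - C 1 by rw [map_one], roots_X_sub_C,
    Multiset.toFinset_add, Multiset.toFinset_nsmul _ 2 (by norm_num),
    Multiset.toFinset_singleton]
  rw [show ({1} : Finset ℂ) ∪ qSZ.roots.toFinset = insert 1 qSZ.roots.toFinset by
    rw [Finset.insert_eq]]
  rw [Finset.sum_insert h1, hsum, hqsum]
  norm_num

lemma heval1 : pSZ.eval (1 : ℂ) = -1 := by simp [pSZ]; norm_num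
lemma hevalm1 : pSZ.eval (-1 : ℂ) = 1 := by simp [pSZ]; norm_num
lemma heval2 : pSZ.eval (2 : ℂ) = 1 := by simp [pSZ]; norm_num


/-- `p(z) = (−z⁶ + 6z⁴ + 4z³ − 9z² − 12z + 4)/8` is a Shabat polynomial in Zapponi
form: its derivative is proportional to `(z−1)(z+1)³(z−2)`, with `p(1) = −1`,
`p(−1) = 1` and `p(2) = 1`; every critical value lies in `{1, -1}`, and the sums
of the distinct roots of `p - 1` and `p + 1` are `1` and `-1` respectively. -/
theorem pSZ_is_shabat_zapponi :
    Polynomial.derivative pSZ =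
      Polynomial.C (-3 / 4 : ℂ) * (Polynomial.X - 1) *
        (Polynomial.X + 1) ^ 3 * (Polynomial.X - 2) ∧
    pSZ.eval (1 : ℂ) = -1 ∧ pSZ.eval (-1 : ℂ) = 1 ∧ pSZ.eval (2 : ℂ) = 1 ∧
    (∀ z : ℂ, (Polynomial.derivative pSZ).eval z = 0 →
      pSZ.eval z = 1 ∨ pSZ.eval z = -1) ∧
    ((pSZ - 1).roots.toFinset.sum id) = 1 ∧
    ((pSZ + 1).roots.toFinset.sum id) = -1 := by
  refine ⟨hderiv, heval1, hevalm1, heval2, ?_, hroots1, hroots2⟩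
  intro z hz
  rw [hderiv] at hz
  simp only [eval_mul, eval_sub, eval_add, eval_pow, eval_C, eval_X, eval_one,
    eval_ofNat, mul_eq_zero] at hz
  rcases hz with ((h | h) | h) | h
  · norm_num at h
  · right; rw [show z = 1 by linear_combination h]; exact heval1
  · left; rw [show z = -1 by
      have := pow_eq_zero_iff (n := 3) (by norm_num) |>.mp h
      linear_combination this]; exact hevalm1
  · left; rw [show z = 2 by linear_combination h]; exact heval2
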